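/- arXiv:0910.2141 — 4 statements merged into one kernel-verified Lean document; each statement's English description precedes it below -/
import Mathlib

section
/- Fix S ∈ ℝ and times t, t' with t + t' > 0, and let f = −(S/3)·(t² + t·t' + t'²)/(t + t'), with θ ∈ (0, π/2) defined by tan θ = f + √(1 + f²). Set a₁ = 1 − (S/2)(t + t')·tan θ and a₂ = 1 + (S/2)(t + t')·cot θ. Then a₁ + a₂ = 2 + (S²/3)(t² + t·t' + t'²), a₁·a₂ = 1 + (S²/12)(t − t')², and both a₁ > 0 and a₂ > 0. -/
theorem principal_axis_scale_factors_sum_product_pos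
    (S t t' : ℝ) (htt : 0 < t + t')
    (f θ : ℝ) (hf : f = -(S / 3) * (t ^ 2 + t * t' + t' ^ 2) / (t + t'))
    (hθ0 : 0 < θ) (hθπ : θ < Real.pi / 2)
    (htan : Real.tan θ = f + Real.sqrt (1 + f ^ 2)) :
    (1 - S / 2 * (t + t') * Real.tan θ)
      + (1 + S / 2 * (t + t') * (Real.cos θ / Real.sin θ))
      = 2 + S ^ 2 / 3 * (t ^ 2 + t * t' + t' ^ 2) ∧
    (1 - S / 2 * (t + t') * Real.tan θ)
      * (1 + S / 2 * (t + t') * (Real.cos θ / Real.sin θ))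
      = 1 + S ^ 2 / 12 * (t - t') ^ 2 ∧
    0 < 1 - S / 2 * (t + t') * Real.tan θ ∧
    0 < 1 + S / 2 * (t + t') * (Real.cos θ / Real.sin θ) := by
  set s : ℝ := Real.sqrt (1 + f ^ 2) with hsdef
  have hs0 : 0 ≤ s := Real.sqrt_nonneg _
  have hs2 : s ^ 2 = 1 + f ^ 2 := Real.sq_sqrt (by positivity)
  have hfs : f < s := by nlinarith
  have hfs' : -f < s := by nlinarith
  have hfs0 : (0:ℝ) < f + s := by linarith
  have hcos : 0 < Real.cos θ := Real.cos_pos_of_mem_Ioo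
    ⟨by linarith [Real.pi_pos], hθπ⟩
  have hsin : 0 < Real.sin θ := Real.sin_pos_of_pos_of_lt_pi hθ0
    (by linarith [Real.pi_pos])
  have htan' : Real.sin θ = (f + s) * Real.cos θ := by
    have := Real.tan_eq_sin_div_cos θ
    rw [htan] at this
    field_simp at this
    linarith [this]
  have hcot : Real.cos θ / Real.sin θ = s - f := by
    rw [htan', div_mul_eq_div_div_swap, div_self hcos.ne']
    rw [div_eq_iff hfs0.ne']
    linear_combination -hs2
  have hfq : f * (t + t') = -(S / 3) * (t ^ 2 + t * t' + t' ^ 2) := by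
    rw [hf]; field_simp
  have hXf : S / 2 * (t + t') * f = -(S ^ 2 / 6) * (t ^ 2 + t * t' + t' ^ 2) := by
    linear_combination (S / 2) * hfq
  rw [htan, hcot]
  have key : (1 - S / 2 * (t + t') * f) ^ 2 - (S / 2 * (t + t') * s) ^ 2
      = 1 + S ^ 2 / 12 * (t - t') ^ 2 := by
    linear_combination (-(S / 2 * (t + t')) ^ 2) * hs2 + (-S) * hfq
  have h2 : 0 < 1 - S / 2 * (t + t') * f := by
    nlinarith [hXf, sq_nonneg (S * (t + t')), sq_nonneg (S * t), sq_nonneg (S * t')]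
  have h1 : (S / 2 * (t + t') * s) ^ 2 < (1 - S / 2 * (t + t') * f) ^ 2 := by
    nlinarith [key, sq_nonneg (S * (t - t'))]
  have ha1 : 0 < 1 - S / 2 * (t + t') * (f + s) := by
    have h3 : S / 2 * (t + t') * s < 1 - S / 2 * (t + t') * f :=
      lt_of_pow_lt_pow_left₀ 2 h2.le h1
    have h4 : S / 2 * (t + t') * (f + s)
        = S / 2 * (t + t') * f + S / 2 * (t + t') * s := by ring
    linarith [h3, h4]
  have hprod : (1 - S / 2 * (t + t') * (f + s))
      * (1 + S / 2 * (t + t') * (s - f)) = 1 + S ^ 2 / 12 * (t - t') ^ 2 := by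
    linear_combination (-(S / 2 * (t + t')) ^ 2) * hs2 + (-S) * hfq
  have hp0 : (0:ℝ) < 1 + S ^ 2 / 12 * (t - t') ^ 2 := by positivity
  have ha2 : 0 < 1 + S / 2 * (t + t') * (s - f) := by
    by_contra h
    push_neg at h
    have hle : (1 - S / 2 * (t + t') * (f + s))
        * (1 + S / 2 * (t + t') * (s - f)) ≤ 0 :=
      mul_nonpos_of_nonneg_of_nonpos ha1.le h
    rw [hprod] at hle
    linarith
  exact ⟨by linear_combination (-S) * hfq, hprod, ha1, ha2⟩
end

section
/- Fix S ≤ 0 and times t ≥ t' ≥ 0 with t + t' > 0, let f = −(S/3)·(t² + t·t' + t'²)/(t + t'), and let θ ∈ (0, π/2) satisfy tan θ = f + √(1 + f²). Then f ≥ 0, tan θ ≥ 1 (so θ ∈ [π/4, π/2)), σ₁² = 1 − (S/2)(t + t')·tan θ ≥ 1, and 0 < σ₂² = 1 + (S/2)(t + t')·cot θ ≤ 1. -/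
theorem negative_shear_scale_factor_bounds
    (S t t' : ℝ) (hS : S ≤ 0) (ht' : 0 ≤ t') (ht : t' ≤ t) (htt : 0 < t + t')
    (f θ : ℝ) (hf : f = -(S / 3) * (t ^ 2 + t * t' + t' ^ 2) / (t + t'))
    (hθ0 : 0 < θ) (hθπ : θ < Real.pi / 2)
    (htan : Real.tan θ = f + Real.sqrt (1 + f ^ 2)) :
    0 ≤ f ∧
    1 ≤ Real.tan θ ∧
    Real.pi / 4 ≤ θ ∧
    1 ≤ 1 - S / 2 * (t + t') * Real.tan θ ∧
    0 < 1 + S / 2 * (t + t') * (Real.cos θ / Real.sin θ) ∧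
    1 + S / 2 * (t + t') * (Real.cos θ / Real.sin θ) ≤ 1 := by
  have ht0 : 0 ≤ t := le_trans ht' ht
  have hf0 : 0 ≤ f := by
    rw [hf]
    apply div_nonneg _ htt.le
    apply mul_nonneg (by linarith) (by nlinarith)
  have hsq1 : (1 : ℝ) ≤ Real.sqrt (1 + f ^ 2) := by
    have := Real.sqrt_le_sqrt (show (1:ℝ) ≤ 1 + f ^ 2 by nlinarith)
    rwa [Real.sqrt_one] at this
  have htan1 : 1 ≤ Real.tan θ := by rw [htan]; linarith
  have hθ4 : Real.pi / 4 ≤ θ := by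
    by_contra h
    push_neg at h
    have := Real.tan_lt_tan_of_nonneg_of_lt_pi_div_two (le_of_lt hθ0) (by linarith [Real.pi_pos]) h
    rw [Real.tan_pi_div_four] at this; linarith
  have hcos : 0 < Real.cos θ := Real.cos_pos_of_mem_Ioo ⟨by linarith [Real.pi_pos], hθπ⟩
  have hsin : 0 < Real.sin θ := Real.sin_pos_of_pos_of_lt_pi hθ0 (by linarith [Real.pi_pos])
  -- key: -(S/2)*(t+t') < tan θ
  have hfsq : f < Real.sqrt (1 + f ^ 2) := by
    have : Real.sqrt (f ^ 2) < Real.sqrt (1 + f ^ 2) :=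
      Real.sqrt_lt_sqrt (by positivity) (by linarith)
    rwa [Real.sqrt_sq hf0] at this
  have h2f : -(S / 2) * (t + t') ≤ 2 * f := by
    have hfm : f * (t + t') = -(S / 3) * (t ^ 2 + t * t' + t' ^ 2) := by
      rw [hf]; field_simp
    nlinarith [sq_nonneg (t - t'), htt]
  have hkey : -(S / 2) * (t + t') < Real.tan θ := by rw [htan]; linarith
  have hkey' : -(S / 2) * (t + t') * Real.cos θ < Real.sin θ := by
    rw [Real.tan_eq_sin_div_cos] at hkey
    exact (lt_div_iff₀ hcos).mp hkey
  have hP : (0:ℝ) ≤ -(S / 2) * (t + t') := mul_nonneg (by linarith) htt.le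
  refine ⟨hf0, htan1, hθ4, ?_, ?_, ?_⟩
  · nlinarith [mul_nonneg hP (by linarith : (0:ℝ) ≤ Real.tan θ)]
  · have h1 : -(S / 2) * (t + t') * Real.cos θ / Real.sin θ < 1 :=
      (div_lt_one hsin).mpr hkey'
    have heq : S / 2 * (t + t') * (Real.cos θ / Real.sin θ)
        = -(-(S / 2) * (t + t') * Real.cos θ / Real.sin θ) := by ring
    rw [heq]; linarith
  · have h2 : 0 ≤ Real.cos θ / Real.sin θ := div_nonneg hcos.le hsin.le
    nlinarith [mul_nonneg hP h2]
end

section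
/- Fix η > 0, S ∈ ℝ, and times t > t' ≥ 0. Then for every x ∈ ℝ³: (2π)^{−3} ∫_{ℝ³} exp( i k·x − η(t − t')·( |k|² − S(t + t')k₁k₂ + (S²/3)(t² + t·t' + t'²)k₂² ) ) d³k = G_η(x,t,t'), i.e. the inverse Fourier transform of the Fourier-space resistive Green's function equals the sheared heat kernel. -/
open MeasureTheory Real Complex
set_option maxHeartbeats 1000000

noncomputable def shearEquiv (c : ℝ) : (ℝ × ℝ) ≃ᵐ (ℝ × ℝ) where
  toFun := fun q => (q.1, q.2 + c * q.1)
  invFun := fun q => (q.1, q.2 - c * q.1)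
  left_inv := fun q => by simp
  right_inv := fun q => by simp
  measurable_toFun := (measurable_fst.prodMk (measurable_snd.add (measurable_fst.const_mul c)))
  measurable_invFun := (measurable_fst.prodMk (measurable_snd.sub (measurable_fst.const_mul c)))

lemma shearEquiv_mp (c : ℝ) : MeasurePreserving (shearEquiv c) (volume : Measure (ℝ×ℝ)) volume :=
  (MeasurePreserving.id (volume : Measure ℝ)).skew_product
    (g := fun x y => y + c * x) (by fun_prop)
    (Filter.Eventually.of_forall fun x => (measurePreserving_add_right volume (c*x)).map_eq)

lemma gauss1d (a y : ℝ) (ha : 0 < a) :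
    ∫ u : ℝ, Complex.exp ((-(a:ℂ)) * (u:ℂ)^2 + (Complex.I * (y:ℝ)) * (u:ℂ) + 0)
      = ((Real.sqrt (Real.pi/a) : ℝ) : ℂ) * Complex.exp (((-(y^2/(4*a)) : ℝ)) : ℂ) := by
  rw [integral_cexp_quadratic (by simpa using ha : (-(a:ℂ)).re < 0) (Complex.I * y) 0]
  congr 1
  · rw [show ((↑Real.pi) / -(-(a:ℂ))) = (((Real.pi/a : ℝ)) : ℂ) by push_cast; ring,
      show ((1:ℂ)/2) = (((1/2 : ℝ)):ℂ) by norm_num,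
      ← Complex.ofReal_cpow (by positivity) (1/2), Real.sqrt_eq_rpow]
  · congr 1
    have ha' : (a:ℂ) ≠ 0 := Complex.ofReal_ne_zero.2 ha.ne'
    field_simp
    ring_nf
    simp [Complex.I_sq]
    linear_combination (y:ℂ)^2 * mul_inv_cancel₀ ha'

lemma key_integral (a b p D : ℝ) (ha : 0 < a) (hD : D = 1 + p - b^2/4) (hDpos : 0 < D)
    (x0 x1 x2 : ℝ) :
    (∫ k : Fin 3 → ℝ, Complex.exp (Complex.I * ((k 0 * x0 + k 1 * x1 + k 2 * x2 : ℝ):ℂ)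
        - ((a * ((k 0)^2 + (k 1)^2 + (k 2)^2 - b * (k 0) * (k 1) + p * (k 1)^2) : ℝ):ℂ)))
    = ((Real.sqrt (Real.pi/a) * Real.sqrt (Real.pi/a) * Real.sqrt (Real.pi/(a*D))
        * Real.exp (-(x2^2/(4*a)) - x0^2/(4*a) - (x1 + b/2*x0)^2/(4*(a*D))) : ℝ) : ℂ) := by
  have haD : 0 < a * D := mul_pos ha hDpos
  obtain ⟨f2, hf2⟩ : ∃ f2 : ℝ → ℂ, f2 = fun w : ℝ =>
    Complex.exp ((-(a:ℂ)) * (w:ℂ)^2 + (Complex.I * (x2:ℝ)) * (w:ℂ) + 0) := ⟨_, rfl⟩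
  obtain ⟨h1, hh1⟩ : ∃ h1 : ℝ → ℂ, h1 = fun u : ℝ =>
    Complex.exp ((-(a:ℂ)) * (u:ℂ)^2 + (Complex.I * (x0:ℝ)) * (u:ℂ) + 0) := ⟨_, rfl⟩
  obtain ⟨g1, hg1⟩ : ∃ g1 : ℝ → ℂ, g1 = fun v : ℝ =>
    Complex.exp ((-((a*D : ℝ):ℂ)) * (v:ℂ)^2 + (Complex.I * ((x1 + b/2*x0 : ℝ):ℝ)) * (v:ℂ) + 0) := ⟨_, rfl⟩
  obtain ⟨H, hH⟩ : ∃ H : (ℝ × ℝ) → ℂ, H = fun q : ℝ × ℝ =>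
    Complex.exp (Complex.I * ((q.1 : ℂ) * x0 + (q.2:ℂ) * x1)
      - (a:ℂ) * ((q.1:ℂ)^2 + (q.2:ℂ)^2 - (b:ℂ) * q.1 * q.2 + (p:ℂ) * (q.2:ℂ)^2)) := ⟨_, rfl⟩
  have hsa0 : (2:Fin 3).succAbove 0 = 0 := by decide
  have hsa1 : (2:Fin 3).succAbove 1 = 1 := by decide
  set e := MeasurableEquiv.piFinSuccAbove (fun _ : Fin 3 => ℝ) 2 with he
  have hDc : (D:ℂ) = 1 + (p:ℂ) - (b:ℂ)^2/4 := by rw [hD]; push_cast; ring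
  calc
    (∫ k : Fin 3 → ℝ, Complex.exp (Complex.I * ((k 0 * x0 + k 1 * x1 + k 2 * x2 : ℝ):ℂ)
        - ((a * ((k 0)^2 + (k 1)^2 + (k 2)^2 - b * (k 0) * (k 1) + p * (k 1)^2) : ℝ):ℂ)))
      = ∫ k : Fin 3 → ℝ, f2 (e k).1 * H ((e k).2 0, (e k).2 1) := by
        refine integral_congr_ae (Filter.Eventually.of_forall fun k => ?_)
        have h2 : (e k).1 = k 2 := rfl
        have h0 : (e k).2 0 = k 0 := by
          simp [he, MeasurableEquiv.piFinSuccAbove_apply, Fin.removeNth, hsa0]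
        have h1' : (e k).2 1 = k 1 := by
          simp [he, MeasurableEquiv.piFinSuccAbove_apply, Fin.removeNth, hsa1]
        beta_reduce
        rw [h2, h0, h1']
        simp only [hf2, hH, ← Complex.exp_add]
        congr 1
        push_cast
        ring
    _ = ∫ q : ℝ × (Fin 2 → ℝ), f2 q.1 * H (q.2 0, q.2 1) :=
        (volume_preserving_piFinSuccAbove (fun _ : Fin 3 => ℝ) 2).integral_comp
          e.measurableEmbedding (fun q => f2 q.1 * H (q.2 0, q.2 1))
    _ = (∫ w : ℝ, f2 w) * ∫ m : Fin 2 → ℝ, H (m 0, m 1) := by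
        rw [Measure.volume_eq_prod]; exact integral_prod_mul f2 (fun m : Fin 2 → ℝ => H (m 0, m 1))
    _ = (∫ w : ℝ, f2 w) * ∫ q : ℝ × ℝ, H q := by
        congr 1
        exact (volume_preserving_finTwoArrow ℝ).integral_comp
          (MeasurableEquiv.finTwoArrow).measurableEmbedding H
    _ = (∫ w : ℝ, f2 w) * ∫ q : ℝ × ℝ, H (Prod.swap q) := by
        congr 1
        rw [Measure.volume_eq_prod]
        exact (Measure.measurePreserving_swap.integral_comp
          MeasurableEquiv.prodComm.measurableEmbedding H).symm
    _ = (∫ w : ℝ, f2 w) * ∫ q : ℝ × ℝ, H (Prod.swap (shearEquiv (b/2) q)) := by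
        congr 1
        exact ((shearEquiv_mp (b/2)).integral_comp
          (shearEquiv (b/2)).measurableEmbedding (fun x => H (Prod.swap x))).symm
    _ = (∫ w : ℝ, f2 w) * ∫ q : ℝ × ℝ, g1 q.1 * h1 q.2 := by
        congr 1
        refine integral_congr_ae (Filter.Eventually.of_forall fun q => ?_)
        show H (q.2 + b/2 * q.1, q.1) = _
        beta_reduce
        simp only [hH, hg1, hh1, ← Complex.exp_add]
        congr 1
        push_cast
        linear_combination ((a:ℂ) * (q.1:ℂ)^2) * hDc
    _ = (∫ w : ℝ, f2 w) * ((∫ v : ℝ, g1 v) * ∫ u : ℝ, h1 u) := by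
        congr 1
        rw [Measure.volume_eq_prod]; exact integral_prod_mul g1 h1
    _ = _ := by
        rw [hf2, hg1, hh1, gauss1d a x2 ha, gauss1d (a*D) (x1 + b/2*x0) haD, gauss1d a x0 ha]
        have hexp : Real.exp (-(x2^2/(4*a)) - x0^2/(4*a) - (x1 + b/2*x0)^2/(4*(a*D)))
            = Real.exp (-(x2^2/(4*a))) * Real.exp (-((x1 + b/2*x0)^2/(4*(a*D))))
              * Real.exp (-(x0^2/(4*a))) := by
          rw [← Real.exp_add, ← Real.exp_add]; ring_nf
        rw [hexp]
        push_cast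
        ring


lemma expo_id (b p D s c σ1 σ2 : ℝ)
    (hsc : s^2 + c^2 = 1) (hs : s ≠ 0) (hc : c ≠ 0)
    (hkey : b * (c^2 - s^2) = 2 * p * s * c)
    (hD : D = 1 + p - b^2/4) (hDne : D ≠ 0)
    (hσ1 : σ1 = 1 - b/2*(s/c)) (hσ2 : σ2 = 1 + b/2*(c/s)) (x0 x1 : ℝ) :
    x0^2 + (x1 + b/2*x0)^2 / D = (x0*c + x1*s)^2/σ1 + (-x0*s + x1*c)^2/σ2 := by
  have hσ1c : σ1 * c = c - b/2*s := by rw [hσ1]; field_simp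
  have hσ2s : σ2 * s = s + b/2*c := by rw [hσ2]; field_simp
  have hσσ : σ1 * σ2 * (s*c) = D * (s*c) := by
    linear_combination (σ2*s)*hσ1c + (c - b/2*s)*hσ2s + (1/2)*hkey - (s*c)*hD
  have hσσ' : σ1 * σ2 = D := mul_right_cancel₀ (mul_ne_zero hs hc) hσσ
  have hσ1ne : σ1 ≠ 0 := fun h => hDne (by rw [← hσσ', h, zero_mul])
  have hσ2ne : σ2 ≠ 0 := fun h => hDne (by rw [← hσσ', h, mul_zero])
  have e1 : σ1*c^2 + σ2*s^2 = 1 := by linear_combination c*hσ1c + s*hσ2s + hsc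
  have e2 : (σ2 - σ1)*s*c = b/2 := by linear_combination c*hσ2s - s*hσ1c + (b/2)*hsc
  have e3 : (σ2*c^2 + σ1*s^2)*(s*c) = (1+p)*(s*c) := by
    linear_combination c^3*hσ2s + s^3*hσ1c + (1/2)*hkey + (s*c + b/2*(c^2-s^2))*hsc
  have e3' : σ2*c^2 + σ1*s^2 = 1 + p := mul_right_cancel₀ (mul_ne_zero hs hc) e3
  have main2 : D*x0^2 + (x1 + b/2*x0)^2 = σ2*(x0*c + x1*s)^2 + σ1*(-x0*s + x1*c)^2 := by
    linear_combination x0^2*hD - x0^2*e3' - x1^2*e1 - 2*x0*x1*e2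
  field_simp
  linear_combination (4*(D*x0^2) + (x1*2 + b*x0)^2)*hσσ' + 4*D*main2


lemma coef_id (a D : ℝ) (ha : 0 < a) (hD : 0 < D) :
    1/(2*Real.pi)^3 * (Real.sqrt (Real.pi/a) * Real.sqrt (Real.pi/a) * Real.sqrt (Real.pi/(a*D)))
      = (4*Real.pi*a) ^ (-(3:ℝ)/2) * D ^ (-(1:ℝ)/2) := by
  have hπ := Real.pi_pos
  have h4pos : (0:ℝ) < 4*Real.pi*a := by positivity
  have h32 : (4*Real.pi*a) ^ (-(3:ℝ)/2) = ((Real.sqrt (4*Real.pi*a))⁻¹)^(3:ℕ) := by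
    rw [Real.sqrt_eq_rpow, ← Real.rpow_neg h4pos.le, ← Real.rpow_natCast ((4*Real.pi*a) ^ (-(1/2):ℝ)) 3,
      ← Real.rpow_mul h4pos.le]
    norm_num
  have hhalf : D ^ (-(1:ℝ)/2) = (Real.sqrt D)⁻¹ := by
    rw [Real.sqrt_eq_rpow, ← Real.rpow_neg hD.le]
    norm_num
  rw [h32, hhalf, show 4*Real.pi*a = 2^2*(Real.pi*a) by ring,
    Real.sqrt_mul (by positivity : (0:ℝ) ≤ (2:ℝ)^2), Real.sqrt_sq (by norm_num : (0:ℝ) ≤ (2:ℝ)),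
    Real.sqrt_mul hπ.le a, Real.sqrt_div hπ.le a, Real.sqrt_div hπ.le (a*D),
    Real.sqrt_mul ha.le D]
  have hsπ : 0 < Real.sqrt Real.pi := Real.sqrt_pos.2 hπ
  have hsa : 0 < Real.sqrt a := Real.sqrt_pos.2 ha
  have hsD : 0 < Real.sqrt D := Real.sqrt_pos.2 hD
  rw [show (2*Real.pi)^3 = 8*(Real.sqrt Real.pi^2)^3 by rw [Real.sq_sqrt hπ.le]; ring]
  field_simp
  ring


theorem inverse_fourier_transform_of_greens_function_is_sheared_heat_kernel
    (η S t t' : ℝ) (hη : 0 < η) (ht' : 0 ≤ t') (ht : t' < t)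
    (f θ : ℝ) (hf : f = -(S / 3) * (t ^ 2 + t * t' + t' ^ 2) / (t + t'))
    (hθ0 : 0 < θ) (hθπ : θ < Real.pi / 2)
    (htan : Real.tan θ = f + Real.sqrt (1 + f ^ 2))
    (σ1sq σ2sq : ℝ)
    (hσ1 : σ1sq = 1 - S / 2 * (t + t') * Real.tan θ)
    (hσ2 : σ2sq = 1 + S / 2 * (t + t') * (Real.cos θ / Real.sin θ)) :
    ∀ x : Fin 3 → ℝ,
      ((1 / (2 * Real.pi) ^ 3 : ℝ) : ℂ) *
        ∫ k : Fin 3 → ℝ,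
          Complex.exp (Complex.I * ((k 0 * x 0 + k 1 * x 1 + k 2 * x 2 : ℝ) : ℂ)
            - ((η * (t - t') * ((k 0) ^ 2 + (k 1) ^ 2 + (k 2) ^ 2
                - S * (t + t') * (k 0) * (k 1)
                + S ^ 2 / 3 * (t ^ 2 + t * t' + t' ^ 2) * (k 1) ^ 2) : ℝ) : ℂ))
      = (((4 * Real.pi * η * (t - t')) ^ (-(3 : ℝ) / 2)
          * (1 + S ^ 2 / 12 * (t - t') ^ 2) ^ (-(1 : ℝ) / 2)
          * Real.exp (-(1 / (4 * η * (t - t')))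
              * ((x 0 * Real.cos θ + x 1 * Real.sin θ) ^ 2 / σ1sq
                + (-(x 0) * Real.sin θ + x 1 * Real.cos θ) ^ 2 / σ2sq
                + (x 2) ^ 2)) : ℝ) : ℂ) := by
  intro x
  have hπ := Real.pi_pos
  have htt : 0 < t - t' := sub_pos.2 ht
  have ha : 0 < η * (t - t') := mul_pos hη htt
  have htp : 0 < t + t' := by nlinarith
  set a := η * (t - t') with ha_def
  set b := S * (t + t') with hb_def
  set p := S ^ 2 / 3 * (t ^ 2 + t * t' + t' ^ 2) with hp_def
  set D := 1 + S ^ 2 / 12 * (t - t') ^ 2 with hD_def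
  have hD : D = 1 + p - b^2/4 := by rw [hD_def, hp_def, hb_def]; ring
  have hDpos : 0 < D := by rw [hD_def]; positivity
  rw [key_integral a b p D ha hD hDpos (x 0) (x 1) (x 2), ← Complex.ofReal_mul,
    Complex.ofReal_inj]
  -- trigonometric facts
  have hθπ' : θ < Real.pi := by linarith
  have hs : 0 < Real.sin θ := Real.sin_pos_of_pos_of_lt_pi hθ0 hθπ'
  have hc : 0 < Real.cos θ := Real.cos_pos_of_mem_Ioo ⟨by linarith, hθπ⟩
  have htan' : Real.tan θ = Real.sin θ / Real.cos θ := Real.tan_eq_sin_div_cos θ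
  have hsc : Real.sin θ ^ 2 + Real.cos θ ^ 2 = 1 := Real.sin_sq_add_cos_sq θ
  have hsqrt : Real.sqrt (1 + f^2) = Real.sin θ / Real.cos θ - f := by
    rw [← htan', htan]; ring
  have h2 : 1 + f^2 = (Real.sin θ / Real.cos θ - f)^2 := by
    rw [← hsqrt, Real.sq_sqrt (by positivity)]
  have hrel : Real.sin θ^2 - Real.cos θ^2 = 2*f*Real.sin θ*Real.cos θ := by
    field_simp at h2
    linear_combination -h2
  have hbf : b * f = -p := by
    rw [hb_def, hp_def, hf]; field_simp
  have hkey : b * (Real.cos θ^2 - Real.sin θ^2) = 2*p*Real.sin θ*Real.cos θ := by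
    linear_combination (-b)*hrel - 2*Real.sin θ*Real.cos θ*hbf
  have hσ1' : σ1sq = 1 - b/2*(Real.sin θ/Real.cos θ) := by
    rw [hσ1, htan', hb_def]; ring
  have hσ2' : σ2sq = 1 + b/2*(Real.cos θ/Real.sin θ) := by
    rw [hσ2, hb_def]; ring
  have hid := expo_id b p D (Real.sin θ) (Real.cos θ) σ1sq σ2sq hsc hs.ne' hc.ne' hkey hD
    hDpos.ne' hσ1' hσ2' (x 0) (x 1)
  have hE : -((x 2)^2/(4*a)) - (x 0)^2/(4*a) - (x 1 + b/2*(x 0))^2/(4*(a*D))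
      = -(1/(4*η*(t-t'))) * ((x 0 * Real.cos θ + x 1 * Real.sin θ) ^ 2 / σ1sq
          + (-(x 0) * Real.sin θ + x 1 * Real.cos θ) ^ 2 / σ2sq + (x 2) ^ 2) := by
    rw [← hid, ha_def]
    field_simp
    ring
  have hcoef := coef_id a D ha hDpos
  have h4 : 4 * Real.pi * η * (t - t') = 4 * Real.pi * a := by rw [ha_def]; ring
  rw [h4, ← hE]
  linear_combination (Real.exp (-((x 2)^2/(4*a)) - (x 0)^2/(4*a)
    - (x 1 + b/2*(x 0))^2/(4*(a*D)))) * hcoef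
end

section
/- Fix η > 0, S ∈ ℝ, and times t > t' ≥ 0. Then the sheared heat kernel is normalized: ∫_{ℝ³} G_η(x,t,t') d³x = 1. -/
open MeasureTheory

lemma integral_comp_linearMap_pi {n : ℕ} (L : (Fin n → ℝ) →ₗ[ℝ] (Fin n → ℝ))
    (hL : LinearMap.det L ≠ 0) (g : (Fin n → ℝ) → ℝ) :
    ∫ x, g (L x) = |LinearMap.det L|⁻¹ * ∫ y, g y := by
  let e : (Fin n → ℝ) ≃ₗ[ℝ] (Fin n → ℝ) := LinearMap.equivOfDetNeZero L hL
  let me : (Fin n → ℝ) ≃ᵐ (Fin n → ℝ) :=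
    e.toContinuousLinearEquiv.toHomeomorph.toMeasurableEquiv
  have hcoe : (me : (Fin n → ℝ) → (Fin n → ℝ)) = L := rfl
  have h1 : ∫ x, g (L x) = ∫ y, g y ∂(Measure.map me volume) := by
    rw [MeasureTheory.integral_map_equiv me g, hcoe]
  rw [h1, hcoe, Measure.map_linearMap_addHaar_pi_eq_smul_addHaar hL volume,
    integral_smul_measure, ENNReal.toReal_ofReal (abs_nonneg _), smul_eq_mul, abs_inv]

set_option maxHeartbeats 1000000 in
theorem sheared_heat_kernel_normalized
    (η S t t' : ℝ) (hη : 0 < η) (ht' : 0 ≤ t') (ht : t' < t)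
    (f θ : ℝ) (hf : f = -(S / 3) * (t ^ 2 + t * t' + t' ^ 2) / (t + t'))
    (hθ0 : 0 < θ) (hθπ : θ < Real.pi / 2)
    (htan : Real.tan θ = f + Real.sqrt (1 + f ^ 2))
    (σ1sq σ2sq : ℝ)
    (hσ1 : σ1sq = 1 - S / 2 * (t + t') * Real.tan θ)
    (hσ2 : σ2sq = 1 + S / 2 * (t + t') * (Real.cos θ / Real.sin θ)) :
    ∫ x : Fin 3 → ℝ,
      (4 * Real.pi * η * (t - t')) ^ (-(3 : ℝ) / 2)
        * (1 + S ^ 2 / 12 * (t - t') ^ 2) ^ (-(1 : ℝ) / 2)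
        * Real.exp (-(1 / (4 * η * (t - t')))
            * ((x 0 * Real.cos θ + x 1 * Real.sin θ) ^ 2 / σ1sq
              + (-(x 0) * Real.sin θ + x 1 * Real.cos θ) ^ 2 / σ2sq
              + (x 2) ^ 2))
      = 1 := by
  have hπ := Real.pi_pos
  have hc : 0 < Real.cos θ := Real.cos_pos_of_mem_Ioo ⟨by linarith, hθπ⟩
  have hs : 0 < Real.sin θ := Real.sin_pos_of_pos_of_lt_pi hθ0 (by linarith)
  have htpos : 0 < Real.tan θ := by
    rw [Real.tan_eq_sin_div_cos]; positivity
  obtain ⟨r, htan', hr2, hr0⟩ : ∃ r, Real.tan θ = f + r ∧ r ^ 2 = 1 + f ^ 2 ∧ 0 ≤ r :=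
    ⟨Real.sqrt (1 + f ^ 2), htan, Real.sq_sqrt (by positivity), Real.sqrt_nonneg _⟩
  clear htan
  have hτ : 0 < t + t' := by linarith
  have hfτ : f * (t + t') = -(S / 3) * (t ^ 2 + t * t' + t' ^ 2) := by
    rw [hf]; field_simp
  have hfr : 0 < f + r := by rw [← htan']; exact htpos
  have hfrmul : (f + r) * (r - f) = 1 := by nlinarith [hr2]
  have hTA : 0 < f + r + S / 2 * (t + t') := by
    by_contra hcon
    push_neg at hcon
    have h1 : r ≤ -(f + S / 2 * (t + t')) := by linarith
    have h2 : (0:ℝ) ≤ -(f + S / 2 * (t + t')) := le_trans hr0 h1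
    have h3 : r ^ 2 ≤ (f + S / 2 * (t + t')) ^ 2 := by nlinarith
    nlinarith [sq_nonneg (S * (t - t'))]
  have hcot : Real.cos θ / Real.sin θ = r - f := by
    have hsin : Real.sin θ = (f + r) * Real.cos θ := by
      rw [Real.tan_eq_sin_div_cos, div_eq_iff hc.ne'] at htan'
      exact htan'
    rw [div_eq_iff hs.ne', hsin]
    linear_combination (-(Real.cos θ)) * hfrmul
  have hσ1' : σ1sq = 1 - S / 2 * (t + t') * (f + r) := by rw [hσ1, htan']
  have hσ2' : σ2sq = 1 + S / 2 * (t + t') * (r - f) := by rw [hσ2, hcot]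
  have hσ2pos : 0 < σ2sq := by
    have hkey : (f + r) * σ2sq = f + r + S / 2 * (t + t') := by
      rw [hσ2']; linear_combination S / 2 * (t + t') * hfrmul
    nlinarith
  have hprod : σ1sq * σ2sq = 1 + S ^ 2 / 12 * (t - t') ^ 2 := by
    rw [hσ1', hσ2']
    linear_combination (-(S / 2 * (t + t')) ^ 2) * hr2 + (-S) * hfτ
  have hσ1pos : 0 < σ1sq := by
    have h4 : 0 < σ1sq * σ2sq := by rw [hprod]; positivity
    nlinarith
  -- abbreviations
  have httpos : 0 < t - t' := sub_pos.mpr ht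
  set k : ℝ := 1 / (4 * η * (t - t')) with hkdef
  have hk : 0 < k := by rw [hkdef]; positivity
  set A : ℝ := (4 * Real.pi * η * (t - t')) ^ (-(3 : ℝ) / 2) with hAdef
  set B : ℝ := (1 + S ^ 2 / 12 * (t - t') ^ 2) ^ (-(1 : ℝ) / 2) with hBdef
  set p : ℝ := Real.sqrt σ1sq with hpdef
  set q : ℝ := Real.sqrt σ2sq with hqdef
  have hp2 : p ^ 2 = σ1sq := Real.sq_sqrt hσ1pos.le
  have hq2 : q ^ 2 = σ2sq := Real.sq_sqrt hσ2pos.le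
  have hp0 : 0 < p := Real.sqrt_pos.mpr hσ1pos
  have hq0 : 0 < q := Real.sqrt_pos.mpr hσ2pos
  set M : Matrix (Fin 3) (Fin 3) ℝ :=
    !![Real.cos θ * p, -(Real.sin θ * q), 0;
       Real.sin θ * p, Real.cos θ * q, 0;
       0, 0, 1] with hMdef
  set L : (Fin 3 → ℝ) →ₗ[ℝ] (Fin 3 → ℝ) := Matrix.toLin' M with hLdef
  have hdet : LinearMap.det L = p * q := by
    rw [hLdef, LinearMap.det_toLin', hMdef, Matrix.det_fin_three]
    simp
    linear_combination p * q * Real.sin_sq_add_cos_sq θ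
  have hdetne : LinearMap.det L ≠ 0 := by rw [hdet]; positivity
  set g : (Fin 3 → ℝ) → ℝ := fun x =>
      A * B * Real.exp (-k
            * ((x 0 * Real.cos θ + x 1 * Real.sin θ) ^ 2 / σ1sq
              + (-(x 0) * Real.sin θ + x 1 * Real.cos θ) ^ 2 / σ2sq
              + (x 2) ^ 2)) with hgdef
  have key := integral_comp_linearMap_pi L hdetne g
  rw [hdet, abs_of_pos (mul_pos hp0 hq0)] at key
  have key2 : ∫ y, g y = (p * q) * ∫ x, g (L x) := by
    rw [key, ← mul_assoc, mul_inv_cancel₀ (by positivity : p * q ≠ 0), one_mul]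
  have heval : ∀ x : Fin 3 → ℝ, g (L x) = A * B * ∏ i : Fin 3, Real.exp (-k * (x i) ^ 2) := by
    intro x
    have h0 : L x 0 = Real.cos θ * p * x 0 - Real.sin θ * q * x 1 := by
      simp [hLdef, hMdef, Matrix.toLin'_apply, Matrix.mulVec, dotProduct,
        Fin.sum_univ_three]
      ring
    have h1 : L x 1 = Real.sin θ * p * x 0 + Real.cos θ * q * x 1 := by
      simp [hLdef, hMdef, Matrix.toLin'_apply, Matrix.mulVec, dotProduct,
        Fin.sum_univ_three]
    have h2 : L x 2 = x 2 := by
      simp [hLdef, hMdef, Matrix.toLin'_apply, Matrix.mulVec, dotProduct,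
        Fin.sum_univ_three]
    rw [hgdef]
    simp only [h0, h1, h2]
    rw [Fin.prod_univ_three, ← Real.exp_add, ← Real.exp_add]
    congr 1
    have e1 : (Real.cos θ * p * x 0 - Real.sin θ * q * x 1) * Real.cos θ
        + (Real.sin θ * p * x 0 + Real.cos θ * q * x 1) * Real.sin θ = p * x 0 := by
      linear_combination p * x 0 * Real.sin_sq_add_cos_sq θ
    have e2 : -(Real.cos θ * p * x 0 - Real.sin θ * q * x 1) * Real.sin θ
        + (Real.sin θ * p * x 0 + Real.cos θ * q * x 1) * Real.cos θ = q * x 1 := by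
      linear_combination q * x 1 * Real.sin_sq_add_cos_sq θ
    rw [e1, e2, mul_pow, mul_pow, hp2, hq2]
    field_simp
    ring
  have hint : ∫ x, g (L x) = A * B * Real.sqrt (Real.pi / k) ^ 3 := by
    simp only [heval]
    rw [MeasureTheory.integral_const_mul,
      MeasureTheory.integral_fintype_prod_volume_eq_pow (ι := Fin 3) (fun v => Real.exp (-k * v ^ 2)),
      integral_gaussian]
    norm_num
  have hX : (0:ℝ) < 4 * Real.pi * η * (t - t') := by positivity
  have hY : (0:ℝ) < 1 + S ^ 2 / 12 * (t - t') ^ 2 := by positivity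
  have hπk : Real.pi / k = 4 * Real.pi * η * (t - t') := by
    rw [hkdef]; field_simp
  have hpq : p * q = Real.sqrt (1 + S ^ 2 / 12 * (t - t') ^ 2) := by
    rw [hpdef, hqdef, ← Real.sqrt_mul hσ1pos.le, hprod]
  have hsX : Real.sqrt (4 * Real.pi * η * (t - t')) ^ 3
      = (4 * Real.pi * η * (t - t')) ^ ((3:ℝ) / 2) := by
    rw [Real.sqrt_eq_rpow, ← Real.rpow_natCast ((4 * Real.pi * η * (t - t')) ^ ((1:ℝ)/2)) 3,
      ← Real.rpow_mul hX.le]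
    norm_num
  have eX : (4 * Real.pi * η * (t - t')) ^ (-(3:ℝ) / 2)
      * (4 * Real.pi * η * (t - t')) ^ ((3:ℝ) / 2) = 1 := by
    rw [← Real.rpow_add hX]; norm_num
  have eY : Real.sqrt (1 + S ^ 2 / 12 * (t - t') ^ 2)
      * (1 + S ^ 2 / 12 * (t - t') ^ 2) ^ (-(1:ℝ) / 2) = 1 := by
    rw [Real.sqrt_eq_rpow, ← Real.rpow_add hY]; norm_num
  calc ∫ x : Fin 3 → ℝ, g x = (p * q) * ∫ x, g (L x) := key2
    _ = (p * q) * (A * B * Real.sqrt (Real.pi / k) ^ 3) := by rw [hint]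
    _ = 1 := by
        rw [hpq, hπk, hsX, hAdef, hBdef]
        rw [show Real.sqrt (1 + S ^ 2 / 12 * (t - t') ^ 2)
            * ((4 * Real.pi * η * (t - t')) ^ (-(3:ℝ) / 2)
              * (1 + S ^ 2 / 12 * (t - t') ^ 2) ^ (-(1:ℝ) / 2)
              * (4 * Real.pi * η * (t - t')) ^ ((3:ℝ) / 2))
            = (Real.sqrt (1 + S ^ 2 / 12 * (t - t') ^ 2)
              * (1 + S ^ 2 / 12 * (t - t') ^ 2) ^ (-(1:ℝ) / 2))
              * ((4 * Real.pi * η * (t - t')) ^ (-(3:ℝ) / 2)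
              * (4 * Real.pi * η * (t - t')) ^ ((3:ℝ) / 2)) from by ring, eX, eY]
        norm_num
end
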